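/- Let $\gamma > 0$, $\alpha > 0$, and define $\rho_\infty(c) = \big(\frac{\gamma}{\gamma+\alpha}\big)^c \frac{\alpha(\alpha+1)\cdots(\alpha+c-1)}{c!} \big(\frac{\alpha}{\alpha+\gamma}\big)^\alpha$ for integers $c \ge 0$ (with the empty product equal to $1$ for $c=0$). Then $\rho_\infty$ satisfies the stationary recursion $(c+1)\rho_\infty(c+1) = \frac{1}{\gamma+\alpha}\big[(c(2\gamma+\alpha)+\gamma\alpha)\rho_\infty(c) - \gamma(c-1+\alpha)\rho_\infty(c-1)\big]$ for all $c \ge 1$, and $\rho_\infty(1) = \frac{\gamma\alpha}{\gamma+\alpha}\rho_\infty(0)$. -/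

import Mathlib

theorem stmt_11 (γ α : ℝ) (hγ : 0 < γ) (hα : 0 < α)
    (ρ : ℕ → ℝ)
    (hρ : ∀ c : ℕ, ρ c = (γ / (γ + α)) ^ c *
      ((∏ i ∈ Finset.range c, (α + i)) / (Nat.factorial c)) *
      (α / (α + γ)) ^ (α : ℝ)) :
    (∀ c : ℕ, 1 ≤ c →
      ((c : ℝ) + 1) * ρ (c + 1) = (1 / (γ + α)) *
        (((c : ℝ) * (2 * γ + α) + γ * α) * ρ c
          - γ * ((c : ℝ) - 1 + α) * ρ (c - 1))) ∧
    ρ 1 = (γ * α / (γ + α)) * ρ 0 := by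
  have hγα : γ + α ≠ 0 := by positivity
  have hαγ : α + γ ≠ 0 := by positivity
  constructor
  · rintro c hc
    obtain ⟨k, rfl⟩ := Nat.exists_eq_add_of_le' hc
    simp only [Nat.add_sub_cancel]
    rw [hρ (k + 1 + 1), hρ (k + 1), hρ k]
    rw [Finset.prod_range_succ, Finset.prod_range_succ]
    have hfk : ((Nat.factorial k : ℝ)) ≠ 0 := by
      exact_mod_cast Nat.factorial_ne_zero k
    have hk1 : ((k : ℝ) + 1) ≠ 0 := by positivity
    have hk2 : ((k : ℝ) + 1 + 1) ≠ 0 := by positivity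
    push_cast [Nat.factorial_succ]
    simp only [div_pow]
    field_simp
    ring
  · rw [hρ 1, hρ 0]
    simp [Nat.factorial]
    field_simp
    exact Or.inl trivial
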